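/- Let d ≥ 1 and l ≥ 1 be integers, let M ⊆ P([d]) be non-empty, and let A be an order-d lattice subset with M-covering number at least l. Then the M-independence number of A satisfies I_M(A) ≥ cov_M(A)/|M|. -/
import Mathlib


open Finset

/-- A `B`-subspace of `[n₁]×⋯×[n_d]`: the set of points agreeing with some point `u`
on all coordinates outside `B`. -/
def IsBSubspace {d : ℕ} (n : Fin d → ℕ) (B : Finset (Fin d))
    (S : Set (∀ j, Fin (n j))) : Prop :=
  ∃ u : ∀ j, Fin (n j), S = {x | ∀ j ∉ B, x j = u j}

/-- An `M`-subspace: a `B`-subspace for some `B ∈ M`. -/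
def IsMSubspace {d : ℕ} (n : Fin d → ℕ) (M : Finset (Finset (Fin d)))
    (S : Set (∀ j, Fin (n j))) : Prop :=
  ∃ B ∈ M, IsBSubspace n B S

/-- The `M`-covering number: the least `k` such that `A` is covered by `k` `M`-subspaces. -/
noncomputable def covM {d : ℕ} (n : Fin d → ℕ) (M : Finset (Finset (Fin d)))
    (A : Set (∀ j, Fin (n j))) : ℕ :=
  sInf {k | ∃ S : Fin k → Set (∀ j, Fin (n j)),
    (∀ i, IsMSubspace n M (S i)) ∧ A ⊆ ⋃ i, S i}

/-- The M-independence number: the largest size of a subset of A no two distinct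
points of which lie in a common M-subspace. -/
noncomputable def indepM {d : ℕ} (n : Fin d → ℕ) (M : Finset (Finset (Fin d)))
    (A : Set (∀ j, Fin (n j))) : ℕ :=
  sSup {m | ∃ A' : Set (∀ j, Fin (n j)), A' ⊆ A ∧ A'.ncard = m ∧
    ∀ x ∈ A', ∀ y ∈ A', x ≠ y → ∀ S, IsMSubspace n M S → ¬(x ∈ S ∧ y ∈ S)}

theorem independence_bound {d l : ℕ} (hd : 0 < d) (hl : 0 < l)
    (n : Fin d → ℕ) (hn : ∀ j, 0 < n j)
    (M : Finset (Finset (Fin d))) (hM : M.Nonempty)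
    (A : Set (∀ j, Fin (n j))) (hA : l ≤ covM n M A) :
    covM n M A ≤ M.card * indepM n M A := by
  classical
  let rel : (∀ j, Fin (n j)) → (∀ j, Fin (n j)) → Prop :=
    fun a x => ∃ B ∈ M, ∀ j ∉ B, a j = x j
  let P : Finset (∀ j, Fin (n j)) → Prop :=
    fun s => ↑s ⊆ A ∧ ∀ x ∈ s, ∀ y ∈ s, x ≠ y → ¬ rel x y
  have hP0 : P ∅ := ⟨by simp, fun x hx => absurd hx (Finset.notMem_empty x)⟩
  obtain ⟨s, hsP, hsmax⟩ : ∃ s, P s ∧ ∀ t, P t → t.card ≤ s.card := by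
    have hne : (Finset.univ.filter P).Nonempty := ⟨∅, Finset.mem_filter.mpr ⟨Finset.mem_univ _, hP0⟩⟩
    obtain ⟨s, hs, hmax⟩ := Finset.exists_max_image _ Finset.card hne
    exact ⟨s, (Finset.mem_filter.mp hs).2,
      fun t ht => hmax t (Finset.mem_filter.mpr ⟨Finset.mem_univ _, ht⟩)⟩
  -- every point of A is related to some point of s
  have hcov : ∀ a ∈ A, ∃ x ∈ s, ∃ B ∈ M, ∀ j ∉ B, a j = x j := by
    intro a ha
    by_cases has : a ∈ s
    · obtain ⟨B, hB⟩ := hM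
      exact ⟨a, has, B, hB, fun j _ => rfl⟩
    · by_contra hno
      have hPi : P (insert a s) := by
        constructor
        · intro x hx
          rcases Finset.mem_insert.mp hx with hx | hx
          · exact hx ▸ ha
          · exact hsP.1 hx
        · intro x hx y hy hxy
          rcases Finset.mem_insert.mp hx with hx | hx <;>
            rcases Finset.mem_insert.mp hy with hy | hy
          · exact absurd (hx.trans hy.symm) hxy
          · rintro ⟨B, hB, hrel⟩
            exact hno ⟨y, hy, B, hB, fun j hj => hx ▸ hrel j hj⟩
          · rintro ⟨B, hB, hrel⟩
            exact hno ⟨x, hx, B, hB, fun j hj => (hy ▸ hrel j hj).symm⟩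
          · exact hsP.2 x hx y hy hxy
      have := hsmax _ hPi
      rw [Finset.card_insert_of_notMem has] at this
      omega
  -- independence number is at least s.card
  have hindep : s.card ≤ indepM n M A := by
    have hbdd : BddAbove {m | ∃ A' : Set (∀ j, Fin (n j)), A' ⊆ A ∧ A'.ncard = m ∧
        ∀ x ∈ A', ∀ y ∈ A', x ≠ y → ∀ S, IsMSubspace n M S → ¬(x ∈ S ∧ y ∈ S)} := by
      refine ⟨Nat.card (∀ j, Fin (n j)), ?_⟩
      rintro m ⟨A', _, hcard, _⟩
      rw [← hcard, ← Set.ncard_univ]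
      exact Set.ncard_le_ncard (Set.subset_univ _) Set.finite_univ
    refine le_csSup hbdd ?_
    refine ⟨↑s, hsP.1, Set.ncard_coe_finset s, ?_⟩
    rintro x hx y hy hxy S ⟨B, hB, u, rfl⟩ ⟨hxS, hyS⟩
    exact hsP.2 x hx y hy hxy ⟨B, hB, fun j hj => (hxS j hj).trans (hyS j hj).symm⟩
  -- covering number is at most M.card * s.card
  have hcovle : covM n M A ≤ M.card * s.card := by
    apply Nat.sInf_le
    let e : Fin (M.card * s.card) ≃ ↥M × ↥s :=
      finProdFinEquiv.symm.trans (Equiv.prodCongr M.equivFin.symm s.equivFin.symm)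
    refine ⟨fun i => {y | ∀ j ∉ ((e i).1 : Finset (Fin d)), y j = ((e i).2 : ∀ j, Fin (n j)) j},
      ?_, ?_⟩
    · intro i
      exact ⟨(e i).1, (e i).1.2, (e i).2, rfl⟩
    · intro a ha
      obtain ⟨x, hx, B, hB, h⟩ := hcov a ha
      refine Set.mem_iUnion.mpr ⟨e.symm (⟨B, hB⟩, ⟨x, hx⟩), ?_⟩
      simp only [Equiv.apply_symm_apply]
      exact h
  calc covM n M A ≤ M.card * s.card := hcovle
    _ ≤ M.card * indepM n M A := Nat.mul_le_mul_left _ hindep
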